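/- Let k be odd, s > 3/2, and for n ∈ Z⁺ set u^{-1,n}(t,x) = -n^{-1/k} + n^{-s} cos(nx + t) and u^{1,n}(t,x) = n^{-1/k} + n^{-s} cos(nx - t). Then for every t ≥ 0 and n ≫ 1, ‖u^{-1,n}(t) - u^{1,n}(t)‖_{H^s} ≥ c ‖n^{-s} sin(nx)‖_{H^s} |sin t| - ‖2n^{-1/k}‖_{H^s} ≥ c' |sin t| - C n^{-1/k}, for constants c, c', C > 0 independent of n and t; in particular liminf_{n→∞} sup_{t∈[0,T]} ‖u^{-1,n}(t) - u^{1,n}(t)‖_{H^s} ≥ c' sup_{t∈[0,T]} |sin t| for every T > 0. -/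

import Mathlib

open Real Complex Filter

lemma twoPiPos : (0:ℝ) < 2 * π := by positivity

/-- The `H^σ` norm of a sequence of Fourier coefficients. -/
noncomputable def seqHs (σ : ℝ) (a : ℤ → ℂ) : ℝ :=
  Real.sqrt (∑' k : ℤ, ((1:ℝ) + (k:ℝ)^2) ^ σ * ‖a k‖^2)

/-- The `H^σ(𝕋)` Sobolev norm of a `2π`-periodic function, via Fourier coefficients. -/
noncomputable def hsNorm (σ : ℝ) (f : ℝ → ℂ) : ℝ :=
  seqHs σ (fun k => fourierCoeffOn twoPiPos f k)

/-- `u^{-1,n}(t,·) - u^{1,n}(t,·)` where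
`u^{-1,n}(t,x) = -n^{-1/k} + n^{-s} cos(nx+t)` and
`u^{1,n}(t,x) = n^{-1/k} + n^{-s} cos(nx-t)`. -/
noncomputable def approxDiff (s : ℝ) (k n : ℕ) (t : ℝ) : ℝ → ℂ :=
  fun x => (((-(n:ℝ) ^ (-(1:ℝ)/(k:ℝ)) + (n:ℝ) ^ (-s) * Real.cos (n * x + t))
    - ((n:ℝ) ^ (-(1:ℝ)/(k:ℝ)) + (n:ℝ) ^ (-s) * Real.cos (n * x - t)) : ℝ) : ℂ)

lemma cont_exp_int (l : ℤ) : Continuous fun x : ℝ => Complex.exp ((l:ℂ) * Complex.I * x) :=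
  Complex.continuous_exp.comp (continuous_const.mul Complex.continuous_ofReal)

lemma integral_exp_int (l : ℤ) :
    (∫ x in (0:ℝ)..(2*π), Complex.exp ((l:ℂ) * Complex.I * x)) =
      if l = 0 then ((2*π : ℝ) : ℂ) else 0 := by
  rcases eq_or_ne l 0 with h | h
  · subst h; simp
  · rw [if_neg h]
    have hc : (l:ℂ) * Complex.I ≠ 0 :=
      mul_ne_zero (by exact_mod_cast h) Complex.I_ne_zero
    rw [integral_exp_mul_complex hc]
    have h1 : Complex.exp ((l:ℂ) * Complex.I * ((2*π:ℝ):ℂ)) = 1 := by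
      rw [show (l:ℂ) * Complex.I * ((2*π:ℝ):ℂ) = (l:ℂ) * (2*π*Complex.I) by push_cast; ring]
      exact Complex.exp_int_mul_two_pi_mul_I l
    rw [h1]
    simp

lemma fourierCoeffOn_trig (A B : ℝ) (n : ℕ) (hn : 1 ≤ n) (m : ℤ) :
    fourierCoeffOn twoPiPos (fun x => ((A + B * Real.sin (n * x) : ℝ) : ℂ)) m =
      (if m = 0 then (A:ℂ) else 0)
      + (if m = (n:ℤ) then (-(B:ℂ)*Complex.I/2) else 0)
      + (if m = -(n:ℤ) then ((B:ℂ)*Complex.I/2) else 0) := by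
  have hf : (fun x : ℝ => ((A + B * Real.sin (n * x) : ℝ) : ℂ)) =
      fun x : ℝ => (A:ℂ) + ((-(B:ℂ)*Complex.I/2) * Complex.exp (((n:ℤ):ℂ) * Complex.I * x)
        + ((B:ℂ)*Complex.I/2) * Complex.exp (((-(n:ℤ)):ℂ) * Complex.I * x)) := by
    funext x
    push_cast
    rw [show ((n:ℂ) * Complex.I * x) = ((n:ℝ) * x : ℂ) * Complex.I by push_cast; ring,
        show (-(n:ℂ) * Complex.I * (x:ℂ)) = (-((n:ℂ) * (x:ℂ))) * Complex.I by ring,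
        Complex.exp_mul_I, Complex.exp_mul_I, Complex.sin_neg, Complex.cos_neg]
    push_cast
    linear_combination ((B:ℂ) * Complex.sin ((n:ℂ) * (x:ℂ))) * Complex.I_sq
  rw [hf, fourierCoeffOn_eq_integral]
  have hfourier : ∀ x : ℝ, (fourier (-m) (x : AddCircle (2*π - 0)) : ℂ)
      = Complex.exp (((-m : ℤ):ℂ) * Complex.I * x) := by
    intro x
    rw [fourier_coe_apply]
    congr 1
    have : (π:ℂ) ≠ 0 := by exact_mod_cast Real.pi_ne_zero
    push_cast
    field_simp
    ring
  simp_rw [hfourier, smul_eq_mul]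
  have key : ∀ (p q : ℤ) (x : ℝ), Complex.exp ((p:ℂ)*Complex.I*x) * Complex.exp ((q:ℂ)*Complex.I*x)
      = Complex.exp (((p+q:ℤ):ℂ)*Complex.I*x) := by
    intro p q x
    rw [← Complex.exp_add]
    congr 1
    push_cast
    ring
  have hint : ∀ x : ℝ, Complex.exp (((-m : ℤ):ℂ) * Complex.I * x) *
        ((A:ℂ) + ((-(B:ℂ)*Complex.I/2) * Complex.exp (((n:ℤ):ℂ) * Complex.I * x)
          + ((B:ℂ)*Complex.I/2) * Complex.exp (((-(n:ℤ)):ℂ) * Complex.I * x)))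
      = (A:ℂ) * Complex.exp (((-m:ℤ):ℂ) * Complex.I * x)
        + ((-(B:ℂ)*Complex.I/2) * Complex.exp (((-m+n:ℤ):ℂ) * Complex.I * x)
          + ((B:ℂ)*Complex.I/2) * Complex.exp (((-m+ -n:ℤ):ℂ) * Complex.I * x)) := by
    intro x
    rw [← key, ← key]
    push_cast
    ring
  simp_rw [hint]
  have hI : ∀ (c : ℂ) (l : ℤ), IntervalIntegrable
      (fun x : ℝ => c * Complex.exp ((l:ℂ) * Complex.I * x)) MeasureTheory.volume 0 (2*π) :=
    fun c l => (continuous_const.mul (cont_exp_int l)).intervalIntegrable _ _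
  have hI2 : ∀ (c d : ℂ) (l j : ℤ), IntervalIntegrable
      (fun x : ℝ => c * Complex.exp ((l:ℂ) * Complex.I * x) + d * Complex.exp ((j:ℂ) * Complex.I * x))
      MeasureTheory.volume 0 (2*π) :=
    fun c d l j => ((continuous_const.mul (cont_exp_int l)).add
      (continuous_const.mul (cont_exp_int j))).intervalIntegrable _ _
  rw [intervalIntegral.integral_add (hI _ _) (hI2 _ _ _ _),
    intervalIntegral.integral_add (hI _ _) (hI _ _),
    intervalIntegral.integral_const_mul, intervalIntegral.integral_const_mul,
    intervalIntegral.integral_const_mul, integral_exp_int, integral_exp_int, integral_exp_int]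
  have hn' : (1:ℤ) ≤ (n:ℤ) := by exact_mod_cast hn
  simp only [show ((-m = 0) ↔ (m = 0)) from by omega,
    show ((-m + (n:ℤ) = 0) ↔ (m = (n:ℤ))) from by omega,
    show ((-m + -(n:ℤ) = 0) ↔ (m = -(n:ℤ))) from by omega]
  have hpi : (π:ℂ) ≠ 0 := by exact_mod_cast Real.pi_ne_zero
  split_ifs <;> first | omega | (push_cast [Complex.real_smul]; field_simp; try ring)

lemma hsNorm_eq (σ : ℝ) (n : ℕ) (hn : 1 ≤ n) (A B : ℝ) :
    hsNorm σ (fun x => ((A + B * Real.sin (n * x) : ℝ) : ℂ))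
      = Real.sqrt (A^2 + (1+(n:ℝ)^2)^σ * (B^2/2)) := by
  have hn0 : (n:ℤ) ≠ 0 := by exact_mod_cast (by omega : n ≠ 0)
  have h0n : (0:ℤ) ∉ ({(n:ℤ), -(n:ℤ)} : Finset ℤ) := by
    simp only [Finset.mem_insert, Finset.mem_singleton]
    push_neg
    omega
  have hnn : (n:ℤ) ∉ ({-(n:ℤ)} : Finset ℤ) := by
    simp only [Finset.mem_singleton]
    omega
  unfold hsNorm seqHs
  congr 1
  rw [tsum_eq_sum (s := ({0, (n:ℤ), -(n:ℤ)} : Finset ℤ))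
    (by
      intro m hm
      simp only [Finset.mem_insert, Finset.mem_singleton] at hm
      push_neg at hm
      simp only [fourierCoeffOn_trig A B n hn]
      simp [hm.1, hm.2.1, hm.2.2])]
  rw [Finset.sum_insert h0n, Finset.sum_insert hnn, Finset.sum_singleton]
  simp only [fourierCoeffOn_trig A B n hn]
  have h1 : -(n:ℤ) ≠ 0 := by omega
  have h2 : (n:ℤ) ≠ -(n:ℤ) := by omega
  simp only [if_pos rfl, if_neg hn0.symm, if_neg h1.symm, if_neg hn0, if_neg h2, if_neg h2.symm,
    if_neg h1, add_zero, zero_add]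
  push_cast
  have e1 : ‖(A:ℂ)‖ = |A| := by simp
  have e2 : ‖-(B:ℂ)*Complex.I/2‖ = |B|/2 := by simp
  have e3 : ‖(B:ℂ)*Complex.I/2‖ = |B|/2 := by simp
  simp only [neg_sq]
  rw [e1, e2, e3, _root_.sq_abs, div_pow, _root_.sq_abs]
  norm_num [Real.one_rpow]
  ring

lemma hsNorm_nonneg (σ : ℝ) (f : ℝ → ℂ) : 0 ≤ hsNorm σ f := Real.sqrt_nonneg _

lemma approxDiff_eq (s : ℝ) (k n : ℕ) (t : ℝ) :
    approxDiff s k n t = fun x =>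
      (((-(2*(n:ℝ)^(-(1:ℝ)/(k:ℝ))) + (-2*(n:ℝ)^(-s)*Real.sin t) * Real.sin (n*x)) : ℝ) : ℂ) := by
  funext x
  unfold approxDiff
  apply Complex.ofReal_inj.mpr
  rw [Real.cos_add, Real.cos_sub]
  ring

lemma hsNorm_diff (s : ℝ) (k n : ℕ) (hn : 1 ≤ n) (t : ℝ) :
    hsNorm s (approxDiff s k n t) =
      Real.sqrt ((-(2*(n:ℝ)^(-(1:ℝ)/(k:ℝ))))^2
        + (1+(n:ℝ)^2)^s * ((-2*(n:ℝ)^(-s)*Real.sin t)^2/2)) := by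
  rw [approxDiff_eq, hsNorm_eq s n hn]

lemma Pb_ge_one (s : ℝ) (hs0 : 0 ≤ s) (n : ℕ) (hn : 1 ≤ n) :
    1 ≤ (1+(n:ℝ)^2)^s * ((n:ℝ)^(-s))^2 := by
  have npos : (0:ℝ) < n := by exact_mod_cast hn
  have h2 : ((n:ℝ)^(-s))^2 = (n:ℝ)^(-s + -s) := by rw [pow_two, ← Real.rpow_add npos]
  have h3 : (n:ℝ)^(s+s) ≤ (1+(n:ℝ)^2)^s := by
    have : ((n:ℝ)*(n:ℝ))^s ≤ (1+(n:ℝ)^2)^s := by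
      apply Real.rpow_le_rpow (by positivity) (by nlinarith [sq_nonneg (n:ℝ)]) hs0
    calc (n:ℝ)^(s+s) = (n:ℝ)^s * (n:ℝ)^s := Real.rpow_add npos s s
      _ = ((n:ℝ)*(n:ℝ))^s := (Real.mul_rpow npos.le npos.le).symm
      _ ≤ _ := this
  calc (1:ℝ) = (n:ℝ)^(s+s) * (n:ℝ)^(-s + -s) := by
        rw [← Real.rpow_add npos, show (s+s) + (-s + -s) = 0 by ring, Real.rpow_zero]
    _ ≤ (1+(n:ℝ)^2)^s * (n:ℝ)^(-s + -s) :=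
        mul_le_mul_of_nonneg_right h3 (Real.rpow_nonneg npos.le _)
    _ = (1+(n:ℝ)^2)^s * ((n:ℝ)^(-s))^2 := by rw [h2]

lemma Pb_le (s : ℝ) (hs0 : 0 ≤ s) (n : ℕ) (hn : 1 ≤ n) :
    (1+(n:ℝ)^2)^s * ((n:ℝ)^(-s))^2 ≤ 2^s := by
  have npos : (0:ℝ) < n := by exact_mod_cast hn
  have hn1 : (1:ℝ) ≤ n := by exact_mod_cast hn
  have h2 : ((n:ℝ)^(-s))^2 = (n:ℝ)^(-s + -s) := by rw [pow_two, ← Real.rpow_add npos]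
  have h3 : (1+(n:ℝ)^2)^s ≤ 2^s * (n:ℝ)^(s+s) := by
    have h4 : (1+(n:ℝ)^2)^s ≤ ((2:ℝ)*((n:ℝ)*(n:ℝ)))^s := by
      apply Real.rpow_le_rpow (by positivity) (by nlinarith) hs0
    calc (1+(n:ℝ)^2)^s ≤ ((2:ℝ)*((n:ℝ)*(n:ℝ)))^s := h4
      _ = 2^s * ((n:ℝ)*(n:ℝ))^s := Real.mul_rpow (by norm_num) (by positivity)
      _ = 2^s * ((n:ℝ)^s * (n:ℝ)^s) := by rw [← Real.mul_rpow npos.le npos.le]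
      _ = 2^s * (n:ℝ)^(s+s) := by rw [← Real.rpow_add npos]
  calc (1+(n:ℝ)^2)^s * ((n:ℝ)^(-s))^2 = (1+(n:ℝ)^2)^s * (n:ℝ)^(-s + -s) := by rw [h2]
    _ ≤ 2^s * (n:ℝ)^(s+s) * (n:ℝ)^(-s + -s) :=
        mul_le_mul_of_nonneg_right h3 (Real.rpow_nonneg npos.le _)
    _ = 2^s := by
        rw [mul_assoc, ← Real.rpow_add npos, show (s+s) + (-s + -s) = 0 by ring, Real.rpow_zero,
          mul_one]

lemma abs_sin_le_hsNorm_diff (s : ℝ) (hs0 : 0 ≤ s) (k n : ℕ) (hn : 1 ≤ n) (t : ℝ) :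
    |Real.sin t| ≤ hsNorm s (approxDiff s k n t) := by
  rw [hsNorm_diff s k n hn t, ← Real.sqrt_sq_eq_abs]
  apply Real.sqrt_le_sqrt
  have h1 := Pb_ge_one s hs0 n hn
  nlinarith [sq_nonneg (Real.sin t), sq_nonneg ((n:ℝ)^(-(1:ℝ)/(k:ℝ))),
    mul_le_mul_of_nonneg_left h1 (sq_nonneg (Real.sin t))]

lemma hsNorm_diff_le (s : ℝ) (hs0 : 0 ≤ s) (k n : ℕ) (hn : 1 ≤ n) (t : ℝ) :
    hsNorm s (approxDiff s k n t) ≤ Real.sqrt (4 + 2*2^s) := by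
  rw [hsNorm_diff s k n hn t]
  apply Real.sqrt_le_sqrt
  have ha1 : (n:ℝ)^(-(1:ℝ)/(k:ℝ)) ≤ 1 := by
    apply Real.rpow_le_one_of_one_le_of_nonpos (by exact_mod_cast hn)
    have : (0:ℝ) ≤ (1:ℝ)/(k:ℝ) := by positivity
    have h : -(1:ℝ)/(k:ℝ) = -((1:ℝ)/(k:ℝ)) := by ring
    rw [h]; linarith
  have ha0 : (0:ℝ) ≤ (n:ℝ)^(-(1:ℝ)/(k:ℝ)) := Real.rpow_nonneg (by positivity) _
  have hPb := Pb_le s hs0 n hn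
  have hP0 : (0:ℝ) ≤ (1+(n:ℝ)^2)^s := Real.rpow_nonneg (by positivity) _
  have hsin : (Real.sin t)^2 ≤ 1 := by
    rw [← _root_.sq_abs]
    nlinarith [Real.abs_sin_le_one t, abs_nonneg (Real.sin t)]
  nlinarith [mul_le_mul_of_nonneg_left hsin (mul_nonneg hP0 (sq_nonneg ((n:ℝ)^(-s)))),
    mul_le_mul_of_nonneg_right hPb (sq_nonneg (Real.sin t)), sq_nonneg (Real.sin t)]


theorem approxSol_nonuniform_dependence (k : ℕ) (hk : Odd k) (s : ℝ) (hs : 3/2 < s) :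
    ∃ c c' C : ℝ, 0 < c ∧ 0 < c' ∧ 0 < C ∧ ∃ N : ℕ,
      (∀ n : ℕ, N ≤ n → ∀ t : ℝ, 0 ≤ t →
        (hsNorm s (approxDiff s k n t) ≥
          c * hsNorm s (fun x => (((n:ℝ) ^ (-s) * Real.sin (n * x) : ℝ) : ℂ)) *
            |Real.sin t|
          - hsNorm s (fun _ => ((2 * (n:ℝ) ^ (-(1:ℝ)/(k:ℝ)) : ℝ) : ℂ))) ∧
        hsNorm s (approxDiff s k n t) ≥
          c' * |Real.sin t| - C * (n:ℝ) ^ (-(1:ℝ)/(k:ℝ))) ∧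
      (∀ T : ℝ, 0 < T →
        c' * (⨆ t ∈ Set.Icc (0:ℝ) T, |Real.sin t|) ≤
          liminf (fun n : ℕ => ⨆ t ∈ Set.Icc (0:ℝ) T, hsNorm s (approxDiff s k n t))
            atTop) := by
  have hs0 : (0:ℝ) ≤ s := by linarith
  refine ⟨2, 1, 1, by norm_num, by norm_num, by norm_num, 1, ?_, ?_⟩
  · intro n hn t _
    have hM : hsNorm s (fun x => (((n:ℝ) ^ (-s) * Real.sin (n * x) : ℝ) : ℂ))
        = Real.sqrt ((0:ℝ)^2 + (1+(n:ℝ)^2)^s * (((n:ℝ)^(-s))^2/2)) := by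
      rw [show (fun x : ℝ => (((n:ℝ) ^ (-s) * Real.sin (n * x) : ℝ) : ℂ))
          = fun x : ℝ => (((0:ℝ) + (n:ℝ) ^ (-s) * Real.sin (n * x) : ℝ) : ℂ) by
        funext x; norm_num]
      rw [hsNorm_eq s n hn]
    constructor
    · have hle : 2 * hsNorm s (fun x => (((n:ℝ) ^ (-s) * Real.sin (n * x) : ℝ) : ℂ))
          * |Real.sin t| ≤ hsNorm s (approxDiff s k n t) := by
        rw [hM, hsNorm_diff s k n hn t]
        have hP0 : (0:ℝ) ≤ (1+(n:ℝ)^2)^s := Real.rpow_nonneg (by positivity) _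
        have e1 : 2 * Real.sqrt ((0:ℝ)^2 + (1+(n:ℝ)^2)^s * (((n:ℝ)^(-s))^2/2)) * |Real.sin t|
            = Real.sqrt (4 * ((0:ℝ)^2 + (1+(n:ℝ)^2)^s * (((n:ℝ)^(-s))^2/2)) * (Real.sin t)^2) := by
          rw [show 4 * ((0:ℝ)^2 + (1+(n:ℝ)^2)^s * (((n:ℝ)^(-s))^2/2)) * (Real.sin t)^2
              = (2 * Real.sqrt ((0:ℝ)^2 + (1+(n:ℝ)^2)^s * (((n:ℝ)^(-s))^2/2)) * |Real.sin t|)^2 by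
            rw [mul_pow, mul_pow, Real.sq_sqrt (by positivity), _root_.sq_abs]; ring]
          rw [Real.sqrt_sq (by positivity)]
        rw [e1]
        apply Real.sqrt_le_sqrt
        nlinarith [sq_nonneg ((n:ℝ)^(-(1:ℝ)/(k:ℝ))), sq_nonneg (Real.sin t),
          mul_nonneg hP0 (sq_nonneg ((n:ℝ)^(-s)))]
      have h0 := hsNorm_nonneg s (fun _ => ((2 * (n:ℝ) ^ (-(1:ℝ)/(k:ℝ)) : ℝ) : ℂ))
      linarith
    · have h2 := abs_sin_le_hsNorm_diff s hs0 k n hn t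
      have ha0 : (0:ℝ) ≤ (n:ℝ)^(-(1:ℝ)/(k:ℝ)) := Real.rpow_nonneg (by positivity) _
      linarith
  · intro T hT
    rw [one_mul]
    have hK0 : (0:ℝ) ≤ Real.sqrt (4 + 2*2^s) := Real.sqrt_nonneg _
    have hSn : ∀ n : ℕ, 1 ≤ n →
        (⨆ t ∈ Set.Icc (0:ℝ) T, |Real.sin t|)
          ≤ ⨆ t ∈ Set.Icc (0:ℝ) T, hsNorm s (approxDiff s k n t) := by
      intro n hn
      have hbdd : BddAbove (Set.range fun t : ℝ =>
          ⨆ _ : t ∈ Set.Icc (0:ℝ) T, hsNorm s (approxDiff s k n t)) := by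
        refine ⟨Real.sqrt (4 + 2*2^s), ?_⟩
        rintro y ⟨t, rfl⟩
        dsimp only
        by_cases ht : t ∈ Set.Icc (0:ℝ) T
        · rw [ciSup_pos ht]
          exact hsNorm_diff_le s hs0 k n hn t
        · haveI : IsEmpty (t ∈ Set.Icc (0:ℝ) T) := ⟨ht⟩
          rw [Real.iSup_of_isEmpty]
          exact hK0
      have hu0 : 0 ≤ ⨆ t ∈ Set.Icc (0:ℝ) T, hsNorm s (approxDiff s k n t) :=
        Real.iSup_nonneg fun t => Real.iSup_nonneg fun _ => hsNorm_nonneg _ _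
      refine Real.iSup_le (fun t => Real.iSup_le (fun ht => ?_) hu0) hu0
      calc |Real.sin t| ≤ hsNorm s (approxDiff s k n t) :=
            abs_sin_le_hsNorm_diff s hs0 k n hn t
        _ = ⨆ _ : t ∈ Set.Icc (0:ℝ) T, hsNorm s (approxDiff s k n t) :=
            (ciSup_pos (f := fun _ => hsNorm s (approxDiff s k n t)) ht).symm
        _ ≤ _ := le_ciSup hbdd t
    apply le_liminf_of_le
    · apply isCoboundedUnder_ge_of_eventually_le atTop (x := Real.sqrt (4 + 2*2^s))
      filter_upwards [eventually_ge_atTop 1] with n hn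
      exact Real.iSup_le (fun t => Real.iSup_le (fun ht => hsNorm_diff_le s hs0 k n hn t) hK0) hK0
    · filter_upwards [eventually_ge_atTop 1] with n hn
      exact hSn n hn
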